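/- Consider sequences (r_j), (p_j), (z_j) in ℝⁿ and scalars (α_j), (β_j) in ℝ such that Wᵀ r₀ = 0, p₀ = z₀ − W (WᵀAW)⁻¹ Wᵀ A z₀, and for all j ≥ 1: r_j = r_{j−1} − α_{j−1} A p_{j−1} and p_j = z_j + β_{j−1} p_{j−1} − W (WᵀAW)⁻¹ Wᵀ A z_j. Then for all j ≥ 0, Wᵀ r_j = 0 and Wᵀ A p_j = 0; i.e., all residuals of deflated PCG remain orthogonal to the deflation basis and all search directions remain A-orthogonal to it, regardless of the choice of the coefficients α_j, β_j and of the vectors z_j. -/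

import Mathlib

open Matrix

private lemma key_posdef {n k : ℕ} (A : Matrix (Fin n) (Fin n) ℝ) (hA : A.PosDef)
    (W : Matrix (Fin n) (Fin k) ℝ)
    (hW : LinearIndependent ℝ (fun j : Fin k => Wᵀ j)) :
    (Wᵀ * A * W).PosDef := by
  refine Matrix.PosDef.of_dotProduct_mulVec_pos ?_ ?_
  · have := Matrix.isHermitian_conjTranspose_mul_mul W hA.1
    simpa [Matrix.conjTranspose_eq_transpose_of_trivial] using this
  · intro x hx
    have hWx : W *ᵥ x ≠ 0 := by
      intro h
      have hinj : Function.Injective W.mulVec := Matrix.mulVec_injective_iff.mpr hW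
      exact hx (hinj (by simp [h]))
    have := hA.dotProduct_mulVec_pos hWx
    calc (0:ℝ) < star (W *ᵥ x) ⬝ᵥ (A *ᵥ (W *ᵥ x)) := this
    _ = star x ⬝ᵥ ((Wᵀ * A * W) *ᵥ x) := by
        simp only [star_trivial, ← Matrix.mulVec_mulVec, Matrix.dotProduct_mulVec,
          Matrix.vecMul_transpose]

private lemma key_zero {n k : ℕ} (A : Matrix (Fin n) (Fin n) ℝ) (hA : A.PosDef)
    (W : Matrix (Fin n) (Fin k) ℝ)
    (hW : LinearIndependent ℝ (fun j : Fin k => Wᵀ j)) (x : Fin n → ℝ) :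
    Wᵀ *ᵥ (A *ᵥ (x - W *ᵥ ((Wᵀ * A * W)⁻¹ *ᵥ (Wᵀ *ᵥ (A *ᵥ x))))) = 0 := by
  have hE : (Wᵀ * A * W) * (Wᵀ * A * W)⁻¹ = 1 :=
    Matrix.mul_nonsing_inv _ ((Matrix.isUnit_iff_isUnit_det _).mp
      (key_posdef A hA W hW).isUnit)
  have : Wᵀ *ᵥ (A *ᵥ (W *ᵥ ((Wᵀ * A * W)⁻¹ *ᵥ (Wᵀ *ᵥ (A *ᵥ x))))) =
      Wᵀ *ᵥ (A *ᵥ x) := by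
    simp only [Matrix.mulVec_mulVec, ← Matrix.mul_assoc, hE, Matrix.one_mulVec,
      Matrix.one_mul]
  rw [Matrix.mulVec_sub, Matrix.mulVec_sub, this, sub_self]

/-- In deflated PCG, given `Wᵀ r₀ = 0`,
`p₀ = z₀ − W (WᵀAW)⁻¹ Wᵀ A z₀`, and the recurrences
`r_j = r_{j−1} − α_{j−1} A p_{j−1}` and `p_j = z_j + β_{j−1} p_{j−1} − W (WᵀAW)⁻¹ Wᵀ A z_j`
for all `j ≥ 1`, all residuals remain orthogonal to the deflation basis and all search
directions remain `A`-orthogonal to it: `Wᵀ r_j = 0` and `Wᵀ A p_j = 0` for all `j ≥ 0`,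
regardless of the choices of `α_j`, `β_j`, and `z_j`. -/
theorem deflatedPCG_orthogonality_invariant {n k : ℕ}
    (A : Matrix (Fin n) (Fin n) ℝ) (hA : A.PosDef)
    (W : Matrix (Fin n) (Fin k) ℝ)
    (hW : LinearIndependent ℝ (fun j : Fin k => Wᵀ j))
    (r p z : ℕ → Fin n → ℝ) (α β : ℕ → ℝ)
    (hr0 : Wᵀ *ᵥ r 0 = 0)
    (hp0 : p 0 = z 0 - W *ᵥ ((Wᵀ * A * W)⁻¹ *ᵥ (Wᵀ *ᵥ (A *ᵥ z 0))))
    (hr : ∀ j : ℕ, r (j + 1) = r j - α j • (A *ᵥ p j))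
    (hp : ∀ j : ℕ, p (j + 1) =
      z (j + 1) + β j • p j - W *ᵥ ((Wᵀ * A * W)⁻¹ *ᵥ (Wᵀ *ᵥ (A *ᵥ z (j + 1))))) :
    ∀ j : ℕ, Wᵀ *ᵥ r j = 0 ∧ Wᵀ *ᵥ (A *ᵥ p j) = 0 := by
  intro j
  induction j with
  | zero =>
    refine ⟨hr0, ?_⟩
    rw [hp0]
    exact key_zero A hA W hW (z 0)
  | succ j ih =>
    obtain ⟨ihr, ihp⟩ := ih
    constructor
    · rw [hr j]
      simp [Matrix.mulVec_sub, Matrix.mulVec_smul, ihr, ihp]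
    · rw [hp j]
      have := key_zero A hA W hW (z (j + 1))
      have h2 : z (j + 1) + β j • p j -
          W *ᵥ ((Wᵀ * A * W)⁻¹ *ᵥ (Wᵀ *ᵥ (A *ᵥ z (j + 1)))) =
          (z (j + 1) - W *ᵥ ((Wᵀ * A * W)⁻¹ *ᵥ (Wᵀ *ᵥ (A *ᵥ z (j + 1))))) +
          β j • p j := by abel
      rw [h2, Matrix.mulVec_add, Matrix.mulVec_add, Matrix.mulVec_smul,
        Matrix.mulVec_smul, this, ihp, smul_zero, zero_add]
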